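/- Let x = (r₁ cos θ₁, r₁ sin θ₁) and y = (r₂ cos θ₂, r₂ sin θ₂) in ℝ² with r₂ > 0 and x ≠ y. Then the directional derivative of y ↦ (1/(2π))·ln‖x − y‖ in the direction of the outward unit normal n_y = y/‖y‖ equals (r₂² − r₁ r₂ cos(θ₁ − θ₂))/(2π·‖x − y‖²·r₂). In particular, when r₂ = 1 it equals (1 − r₁ cos(θ₁ − θ₂))/(2π·(1 + r₁² − 2 r₁ cos(θ₁ − θ₂))). -/

import Mathlib

open Real

/-- In polar coordinates, the directional derivative of `y ↦ (1/(2π))·ln‖x − y‖` in the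
direction of the outward unit normal `n_y = y/‖y‖` equals
`(r₂² − r₁r₂cos(θ₁ − θ₂))/(2π‖x − y‖²r₂)`; when `r₂ = 1` it equals
`(1 − r₁cos(θ₁ − θ₂))/(2π(1 + r₁² − 2r₁cos(θ₁ − θ₂)))`. -/
theorem normal_derivative_fundamental_solution (r₁ r₂ θ₁ θ₂ : ℝ) (hr₂ : 0 < r₂)
    (x y : EuclideanSpace ℝ (Fin 2))
    (hx : x = ![r₁ * Real.cos θ₁, r₁ * Real.sin θ₁])
    (hy : y = ![r₂ * Real.cos θ₂, r₂ * Real.sin θ₂])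
    (hxy : x ≠ y) :
    fderiv ℝ (fun z : EuclideanSpace ℝ (Fin 2) => (1 / (2 * π)) * Real.log ‖x - z‖) y
        (‖y‖⁻¹ • y)
      = (r₂ ^ 2 - r₁ * r₂ * Real.cos (θ₁ - θ₂)) / (2 * π * ‖x - y‖ ^ 2 * r₂)
    ∧ (r₂ = 1 →
      fderiv ℝ (fun z : EuclideanSpace ℝ (Fin 2) => (1 / (2 * π)) * Real.log ‖x - z‖) y
          (‖y‖⁻¹ • y)
        = (1 - r₁ * Real.cos (θ₁ - θ₂)) /
            (2 * π * (1 + r₁ ^ 2 - 2 * r₁ * Real.cos (θ₁ - θ₂)))) := by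
  have hπ : (π : ℝ) ≠ 0 := Real.pi_ne_zero
  have hw : x - y ≠ 0 := sub_ne_zero.mpr hxy
  have hnorm : ‖x - y‖ ≠ 0 := norm_ne_zero_iff.mpr hw
  have hr₂' : r₂ ≠ 0 := ne_of_gt hr₂
  -- inner product computations
  have hinner_xy : (inner ℝ x y : ℝ) = r₁ * r₂ * Real.cos (θ₁ - θ₂) := by
    obtain ⟨u, rfl⟩ : ∃ u, x = WithLp.toLp 2 u := ⟨x.ofLp, rfl⟩
    obtain ⟨v, rfl⟩ : ∃ v, y = WithLp.toLp 2 v := ⟨y.ofLp, rfl⟩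
    simp only at hx hy
    subst hx hy
    simp only [PiLp.inner_apply]
    simp [PiLp.inner_apply, Fin.sum_univ_two, Real.cos_sub, RCLike.inner_apply]
    ring
  have hyy : (inner ℝ y y : ℝ) = r₂ ^ 2 := by
    obtain ⟨v, rfl⟩ : ∃ v, y = WithLp.toLp 2 v := ⟨y.ofLp, rfl⟩
    simp only at hy
    subst hy
    simp only [PiLp.inner_apply]
    simp [PiLp.inner_apply, Fin.sum_univ_two, RCLike.inner_apply]
    nlinarith [Real.sin_sq_add_cos_sq θ₂]
  have hny : ‖y‖ = r₂ := by
    have h := real_inner_self_eq_norm_sq y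
    rw [hyy] at h
    nlinarith [norm_nonneg y]
  -- the function rewrite
  have hfun : (fun z : EuclideanSpace ℝ (Fin 2) => (1 / (2 * π)) * Real.log ‖x - z‖)
      = fun z => (1 / (4 * π)) * Real.log (inner ℝ (x - z) (x - z) : ℝ) := by
    funext z
    rw [real_inner_self_eq_norm_sq, Real.log_pow]
    push_cast
    ring
  -- derivative of the inner-square function
  have hgy : (inner ℝ (x - y) (x - y) : ℝ) ≠ 0 := by
    rw [real_inner_self_eq_norm_sq]
    positivity
  have hsub : HasFDerivAt (fun z : EuclideanSpace ℝ (Fin 2) => x - z)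
      (-(ContinuousLinearMap.id ℝ (EuclideanSpace ℝ (Fin 2)))) y := by
    simpa using (hasFDerivAt_id (𝕜 := ℝ) y).const_sub x
  have hg : HasFDerivAt (fun z : EuclideanSpace ℝ (Fin 2) => (inner ℝ (x - z) (x - z) : ℝ))
      ((fderivInnerCLM ℝ (x - y, x - y)).comp
        ((-(ContinuousLinearMap.id ℝ (EuclideanSpace ℝ (Fin 2)))).prod
          (-(ContinuousLinearMap.id ℝ (EuclideanSpace ℝ (Fin 2)))))) y :=
    hsub.inner ℝ hsub
  have hlog := (Real.hasDerivAt_log hgy).comp_hasFDerivAt y hg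
  have hF := hlog.const_mul (1 / (4 * π))
  have hF' : HasFDerivAt (fun z : EuclideanSpace ℝ (Fin 2) => (1 / (2 * π)) * Real.log ‖x - z‖)
      ((1 / (4 * π)) • ((inner ℝ (x - y) (x - y) : ℝ)⁻¹ •
        ((fderivInnerCLM ℝ (x - y, x - y)).comp
        ((-(ContinuousLinearMap.id ℝ (EuclideanSpace ℝ (Fin 2)))).prod
          (-(ContinuousLinearMap.id ℝ (EuclideanSpace ℝ (Fin 2)))))))) y := by
    rw [hfun]
    exact hF
  have hfd := hF'.fderiv
  rw [hfd]
  have hval : ((1 / (4 * π)) • ((inner ℝ (x - y) (x - y) : ℝ)⁻¹ •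
        ((fderivInnerCLM ℝ (x - y, x - y)).comp
        ((-(ContinuousLinearMap.id ℝ (EuclideanSpace ℝ (Fin 2)))).prod
          (-(ContinuousLinearMap.id ℝ (EuclideanSpace ℝ (Fin 2)))))))) (‖y‖⁻¹ • y)
      = (1 / (4 * π)) * ((inner ℝ (x - y) (x - y) : ℝ)⁻¹ *
          (-2 * (‖y‖⁻¹ * ((inner ℝ x y : ℝ) - (inner ℝ y y : ℝ))))) := by
    simp [fderivInnerCLM_apply, real_inner_smul_right, inner_sub_left, inner_sub_right, real_inner_comm x y]
    ring
  rw [hval, hny, hinner_xy, hyy, real_inner_self_eq_norm_sq]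
  have hd2 : ‖x - y‖ ^ 2 = r₁ ^ 2 + r₂ ^ 2 - 2 * r₁ * r₂ * Real.cos (θ₁ - θ₂) := by
    rw [← real_inner_self_eq_norm_sq]
    obtain ⟨u, rfl⟩ : ∃ u, x = WithLp.toLp 2 u := ⟨x.ofLp, rfl⟩
    obtain ⟨v, rfl⟩ : ∃ v, y = WithLp.toLp 2 v := ⟨y.ofLp, rfl⟩
    simp only at hx hy
    subst hx hy
    simp only [PiLp.inner_apply]
    simp [PiLp.inner_apply, Fin.sum_univ_two, RCLike.inner_apply, PiLp.sub_apply,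
      Real.cos_sub]
    nlinarith [Real.sin_sq_add_cos_sq θ₁, Real.sin_sq_add_cos_sq θ₂]
  have key : 1 / (4 * π) * ((‖x - y‖ ^ 2)⁻¹ *
        (-2 * (r₂⁻¹ * (r₁ * r₂ * Real.cos (θ₁ - θ₂) - r₂ ^ 2))))
      = (r₂ ^ 2 - r₁ * r₂ * Real.cos (θ₁ - θ₂)) / (2 * π * ‖x - y‖ ^ 2 * r₂) := by
    have hd2ne : ‖x - y‖ ^ 2 ≠ 0 := pow_ne_zero 2 hnorm
    field_simp
    ring
  rw [key]
  refine ⟨rfl, fun h1 => ?_⟩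
  subst h1
  rw [hd2]
  norm_num
  ring_nf
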